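/- With T₃ as defined in the context, suppose b' ∈ R satisfies b · b' = 1. Let w be the row vector (1, b', 1, 1, b', b', 1) of length 7 over R and let I be the 7×7 identity matrix. Then w · (T₃ − I) = 0, i.e. the vector w is invariant under right multiplication by T₃. -/

import Mathlib

/-- `M v` is the 7×7 matrix whose first column is `v` and whose remaining
columns are the standard basis columns. -/
def M {R : Type*} [CommRing R] (v : Fin 7 → R) : Matrix (Fin 7) (Fin 7) R :=
  Matrix.of fun i j => if j = 0 then v i else if i = j then 1 else 0

/-- if `b · b' = 1`, then the row vector
`w = (1, b', 1, 1, b', b', 1)` satisfies `w · (T₃ − I) = 0`, i.e. `w` is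
invariant under right multiplication by the triangle monodromy matrix `T₃`. -/
theorem stmt6 {R : Type*} [CommRing R] (a b c b' : R) (hb : b * b' = 1) :
    Matrix.vecMul ![1, b', 1, 1, b', b', 1]
      (M ![a*b*c, b - a*b*c, a - a*b*c, c - a*b*c,
            a*b*c - b*c, a*b*c - a*b, a*b*c - a*c] - 1) = 0 := by
  funext j
  simp only [Matrix.vecMul, dotProduct, M, Matrix.sub_apply, Matrix.one_apply,
    Matrix.of_apply, Fin.sum_univ_succ]
  fin_cases j <;>
    simp [Fin.succ_ne_zero, Fin.ext_iff, Matrix.cons_val', Matrix.vecHead, Matrix.vecTail] <;>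
    linear_combination (a*c - a - c + 1) * hb
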